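/- For integers 2 ≤ k ≤ (N/log N)^{1/2} + 1 and N ≥ 3, the holding probability p_{kk} = ∏_{i=1}^{k-1}(1 - i/N) satisfies p_{kk} ≤ 1 - (1/4)·C(k,2)/N. -/

import Mathlib

open Finset Real

lemma gauss_real (m : ℕ) : ∑ i ∈ Finset.Icc 1 m, (i:ℝ) = m*(m+1)/2 := by
  induction m with
  | zero => simp
  | succ n ih =>
    rw [Finset.sum_Icc_succ_top (by omega)] ; rw [ih]; push_cast; ring

/-- For integers N ≥ 3 and 2 ≤ k ≤ √(N/log N) + 1, the Wright-Fisher holding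
probability p_{kk} = ∏_{i=1}^{k-1}(1 - i/N) satisfies p_{kk} ≤ 1 - (1/4)·(k(k-1)/2)/N. -/
theorem stmt_13 (N k : ℕ) (hN : 3 ≤ N) (hk : 2 ≤ k)
    (hkN : (k : ℝ) ≤ Real.sqrt ((N : ℝ) / Real.log N) + 1) :
    ∏ i ∈ Finset.Icc 1 (k - 1), (1 - (i : ℝ) / N)
      ≤ 1 - (1 / 4) * ((k : ℝ) * ((k : ℝ) - 1) / 2) / N := by
  have hN0 : (0:ℝ) < N := by positivity
  have hN3 : (3:ℝ) ≤ N := by exact_mod_cast hN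
  have hlog : (1:ℝ) ≤ Real.log N := by
    rw [Real.le_log_iff_exp_le hN0]
    calc Real.exp 1 ≤ 2.7182818286 := le_of_lt Real.exp_one_lt_d9
    _ ≤ N := by linarith
  have hdiv : (N:ℝ) / Real.log N ≤ N := by
    rw [div_le_iff₀ (by linarith)]
    nlinarith
  have hsqrt : Real.sqrt ((N:ℝ) / Real.log N) ≤ Real.sqrt N :=
    Real.sqrt_le_sqrt hdiv
  have hsN : Real.sqrt N ≤ N := by
    nlinarith [Real.sq_sqrt hN0.le, Real.sqrt_nonneg (N:ℝ)]
  have hk1 : (k:ℝ) - 1 ≤ Real.sqrt N := by linarith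
  have hk1nn : (0:ℝ) ≤ (k:ℝ) - 1 := by
    have : (2:ℝ) ≤ k := by exact_mod_cast hk
    linarith
  have hsq : ((k:ℝ) - 1)^2 ≤ N := by
    nlinarith [Real.sq_sqrt hN0.le]
  have hkk : (k:ℝ) * ((k:ℝ) - 1) ≤ 2 * N := by nlinarith
  set x : ℝ := (k:ℝ) * ((k:ℝ) - 1) / 2 / N with hx
  have hx0 : 0 ≤ x := by positivity
  have hx1 : x ≤ 1 := by
    rw [hx, div_le_one hN0, div_le_iff₀ (by norm_num : (0:ℝ) < 2)] at *
    linarith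
  -- each factor is between 0 and exp(-i/N)
  have hstep : ∏ i ∈ Finset.Icc 1 (k - 1), (1 - (i : ℝ) / N)
      ≤ ∏ i ∈ Finset.Icc 1 (k - 1), Real.exp (-((i:ℝ)/N)) := by
    apply Finset.prod_le_prod
    · intro i hi
      have hi' := Finset.mem_Icc.mp hi
      have : (i:ℝ) ≤ (k:ℝ) - 1 := by
        have : (i:ℝ) ≤ ((k-1 : ℕ):ℝ) := by exact_mod_cast hi'.2
        rwa [Nat.cast_sub (by omega), Nat.cast_one] at this
      have hiN : (i:ℝ) ≤ N := by nlinarith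
      have : (i:ℝ)/N ≤ 1 := by rw [div_le_one hN0]; linarith
      linarith
    · intro i _
      have := Real.add_one_le_exp (-((i:ℝ)/N))
      linarith
  have hsum : ∑ i ∈ Finset.Icc 1 (k-1), (-((i:ℝ)/N)) = -x := by
    have hc : ((k-1:ℕ):ℝ) = (k:ℝ) - 1 := by
      rw [Nat.cast_sub (by omega), Nat.cast_one]
    rw [Finset.sum_neg_distrib, ← Finset.sum_div, gauss_real, hc, hx]
    ring
  have hprodexp : ∏ i ∈ Finset.Icc 1 (k - 1), Real.exp (-((i:ℝ)/N))
      = Real.exp (-x) := by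
    rw [← Real.exp_sum, hsum]
  have hexp : Real.exp (-x) ≤ 1 - x/4 := by
    have h1 : x + 1 ≤ Real.exp x := Real.add_one_le_exp x
    have h2 : Real.exp (-x) * Real.exp x = 1 := by
      rw [← Real.exp_add]; simp
    have h3 : 0 < Real.exp (-x) := Real.exp_pos _
    nlinarith
  calc ∏ i ∈ Finset.Icc 1 (k - 1), (1 - (i : ℝ) / N)
      ≤ Real.exp (-x) := by rw [← hprodexp]; exact hstep
    _ ≤ 1 - x/4 := hexp
    _ = 1 - (1 / 4) * ((k : ℝ) * ((k : ℝ) - 1) / 2) / N := by rw [hx]; ring
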